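/- Let K ≥ 2 and let μ be a probability measure on ℝ^K such that for every k ∈ {1,…,K}, the set {v ∈ ℝ^K : v_k = (1/K) Σ_{i=1}^K v_i} has μ-measure zero. For v ∈ ℝ^K with mean v̄, set w_k = v_k − v̄, w_k⁺ = max(0, w_k), w_k⁻ = max(0, −w_k), and m_k = e^{−w_k⁻}(e^{w_k⁺} − 1 + ∏_{ℓ≠k}(1 − e^{−w_ℓ⁻})). Then for μ-almost every v ∈ ℝ^K and every k ∈ {1,…,K}, 𝟙{m_k ≠ 0}·e^{w_k} / Σ_{ℓ=1}^K 𝟙{m_ℓ ≠ 0}·e^{w_ℓ} = EvSoftmax(v)_k. -/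

import Mathlib

open Finset MeasureTheory

/-- The ev-softmax function:
`EvSoftmax(v)_k = 𝟙{v_k ≥ v̄} e^{v_k} / ∑_l 𝟙{v_l ≥ v̄} e^{v_l}`,
where `v̄` is the arithmetic mean of `v`. -/
noncomputable def evSoftmax {K : ℕ} (v : Fin K → ℝ) (k : Fin K) : ℝ :=
  (if (∑ i : Fin K, v i) / K ≤ v k then Real.exp (v k) else 0) /
    ∑ l : Fin K, (if (∑ i : Fin K, v i) / K ≤ v l then Real.exp (v l) else 0)

/-- If `μ` is a probability measure on `ℝ^K` (`K ≥ 2`) assigning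
measure zero to each hyperplane `{v : v k = v̄}`, then for `μ`-almost every `v`
and every `k`, the post-hoc evidential probability built from `w k = v k - v̄`
equals `EvSoftmax(v)_k`. -/
lemma key_pointwise (K : ℕ) (hK : 2 ≤ K) (v : Fin K → ℝ)
    (h : ∀ j : Fin K, v j ≠ (∑ i : Fin K, v i) / K) (k : Fin K) :
      (fun (w : Fin K → ℝ) (m : Fin K → ℝ) =>
        (if m k ≠ 0 then Real.exp (w k) else 0) /
          ∑ l : Fin K, (if m l ≠ 0 then Real.exp (w l) else 0))
        (fun k => v k - (∑ i : Fin K, v i) / K)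
        (fun k => Real.exp (-(max (0:ℝ) (-(v k - (∑ i : Fin K, v i) / K)))) *
          (Real.exp (max (0:ℝ) (v k - (∑ i : Fin K, v i) / K)) - 1 +
            ∏ l ∈ univ.erase k,
              (1 - Real.exp (-(max (0:ℝ) (-(v l - (∑ i : Fin K, v i) / K)))))))
      = evSoftmax v k := by
  have hK0 : (K : ℝ) ≠ 0 := by positivity
  set c : ℝ := (∑ i : Fin K, v i) / K with hc
  set M : Fin K → ℝ := fun j =>
    Real.exp (-(max (0:ℝ) (-(v j - c)))) *
      (Real.exp (max (0:ℝ) (v j - c)) - 1 +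
        ∏ l ∈ univ.erase j, (1 - Real.exp (-(max (0:ℝ) (-(v l - c)))))) with hM
  have hsum : ∑ i : Fin K, (v i - c) = 0 := by
    rw [Finset.sum_sub_distrib, Finset.sum_const, Finset.card_univ, Fintype.card_fin]
    rw [hc]; rw [nsmul_eq_mul, mul_div_assoc', mul_div_cancel_left₀ _ hK0, sub_self]
  have hfac : ∀ j : Fin K, (0:ℝ) ≤ 1 - Real.exp (-(max (0:ℝ) (-(v j - c)))) := by
    intro j
    have : Real.exp (-(max (0:ℝ) (-(v j - c)))) ≤ 1 :=
      Real.exp_le_one_iff.2 (neg_nonpos.2 (le_max_left _ _))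
    linarith
  have hpos : ∀ j : Fin K, c < v j → 0 < M j := by
    intro j hj
    have h1 : max (0:ℝ) (v j - c) = v j - c := max_eq_right (by linarith)
    have h2 : 1 < Real.exp (v j - c) := by
      rw [← Real.exp_zero]; exact Real.exp_lt_exp.2 (by linarith)
    have hP : (0:ℝ) ≤ ∏ l ∈ univ.erase j, (1 - Real.exp (-(max (0:ℝ) (-(v l - c))))) :=
      Finset.prod_nonneg fun l _ => hfac l
    rw [hM]
    refine mul_pos (Real.exp_pos _) ?_
    rw [h1]; linarith
  have hneg : ∀ j : Fin K, v j < c → M j = 0 := by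
    intro j hj
    have h1 : max (0:ℝ) (v j - c) = 0 := max_eq_left (by linarith)
    have hex : ∃ l ∈ univ.erase j, c < v l := by
      by_contra hcon
      push_neg at hcon
      have hsle : ∑ i ∈ univ.erase j, (v i - c) ≤ 0 :=
        Finset.sum_nonpos fun i hi => by
          have := hcon i hi
          have := (h i).lt_or_gt
          rcases this with h' | h'
          · linarith
          · linarith [hcon i hi]
      have heq : (v j - c) + ∑ i ∈ univ.erase j, (v i - c) = ∑ i : Fin K, (v i - c) :=
        Finset.add_sum_erase univ (fun i => v i - c) (Finset.mem_univ j)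
      rw [hsum] at heq
      linarith
    obtain ⟨l, hl, hlc⟩ := hex
    have hfz : 1 - Real.exp (-(max (0:ℝ) (-(v l - c)))) = 0 := by
      have : max (0:ℝ) (-(v l - c)) = 0 := max_eq_left (by linarith)
      rw [this]; simp
    rw [hM]
    simp only
    rw [h1, Finset.prod_eq_zero hl hfz]
    simp
  have hiff : ∀ j : Fin K, (M j ≠ 0 ↔ c ≤ v j) := by
    intro j
    rcases (h j).lt_or_gt with h' | h'
    · simp [hneg j h', not_le.2 h']
    · simp [(hpos j h').ne', le_of_lt h']
  have hif : ∀ j : Fin K, (if M j ≠ 0 then Real.exp (v j - c) else 0)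
      = Real.exp (-c) * (if c ≤ v j then Real.exp (v j) else 0) := by
    intro j
    by_cases hcj : c ≤ v j
    · rw [if_pos ((hiff j).2 hcj), if_pos hcj, sub_eq_add_neg, Real.exp_add, mul_comm]
    · rw [if_neg (fun hh => hcj ((hiff j).1 hh)), if_neg hcj, mul_zero]
  show (if M k ≠ 0 then Real.exp (v k - c) else 0) /
      (∑ l : Fin K, (if M l ≠ 0 then Real.exp (v l - c) else 0)) = evSoftmax v k
  rw [hif]
  conv_lhs => rw [Finset.sum_congr rfl fun l _ => hif l]
  rw [← Finset.mul_sum, mul_div_mul_left _ _ (Real.exp_ne_zero _)]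
  rfl

theorem posthoc_evidential_eq_evSoftmax_ae
    (K : ℕ) (hK : 2 ≤ K)
    (μ : Measure (Fin K → ℝ)) [IsProbabilityMeasure μ]
    (hμ : ∀ k : Fin K, μ {v | v k = (∑ i : Fin K, v i) / K} = 0) :
    ∀ᵐ v ∂μ, ∀ k : Fin K,
      (fun (w : Fin K → ℝ) (m : Fin K → ℝ) =>
        (if m k ≠ 0 then Real.exp (w k) else 0) /
          ∑ l : Fin K, (if m l ≠ 0 then Real.exp (w l) else 0))
        (fun k => v k - (∑ i : Fin K, v i) / K)
        (fun k => Real.exp (-(max (0:ℝ) (-(v k - (∑ i : Fin K, v i) / K)))) *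
          (Real.exp (max (0:ℝ) (v k - (∑ i : Fin K, v i) / K)) - 1 +
            ∏ l ∈ univ.erase k,
              (1 - Real.exp (-(max (0:ℝ) (-(v l - (∑ i : Fin K, v i) / K)))))))
      = evSoftmax v k := by
  have hae : ∀ᵐ v ∂μ, ∀ j : Fin K, v j ≠ ((∑ i : Fin K, v i) / K : ℝ) :=
    ae_all_iff.2 fun j => by
      rw [ae_iff]; simpa using hμ j
  filter_upwards [hae] with v hv k
  exact key_pointwise K hK v hv k
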